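/- Let (G,e,H,f) satisfy: G, H connected loopless multigraphs, φ: u_i ↦ v_i an isomorphism G\e → H\f, and ψ an isomorphism G/e → H/f. Let C: π(1) → π(2) → ⋯ → π(k) → π(1) be a directed cycle in the digraph D_ψ (defined from ψ as in the construction), and let W be a multigraph with vertices w_1,…,w_k forming a vertex orbit of an automorphism ξ with ξ(w_j) = w_{j+1} (indices mod k). Let G' be obtained from G and W by identifying u_{π(j)} with w_j for all j ∈ [k], and H' from H and W by identifying v_{π(j)} with w_j for all j ∈ [k]. Then G'\e ≅ H'\f and G'/e ≅ H'/f; in particular G' and H' have equal Tutte polynomials. -/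

import Mathlib

open scoped BigOperators
open MvPolynomial

attribute [local instance] Classical.propDecidable

/-- A multigraph: finite vertex and edge types, each edge has an unordered
pair of endpoints (loops and parallel edges allowed). -/
structure Multigraph where
  V : Type
  E : Type
  [fintypeV : Fintype V]
  [fintypeE : Fintype E]
  [decEqV : DecidableEq V]
  [decEqE : DecidableEq E]
  ends : E → Sym2 V

attribute [instance] Multigraph.fintypeV Multigraph.fintypeE
  Multigraph.decEqV Multigraph.decEqE

noncomputable instance quotSetoidFintype {α : Type} [Fintype α] (s : Setoid α) :
    Fintype (Quotient s) := by classical exact Quotient.fintype s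

noncomputable instance connCompFintype {α : Type} [Fintype α] (G : SimpleGraph α) :
    Fintype G.ConnectedComponent := by
  classical exact Fintype.ofSurjective G.connectedComponentMk fun c => c.exists_rep

namespace Multigraph

variable (G : Multigraph)

/-- The simple graph induced by a set of edges `A` (parallel edges and loops
do not affect connectivity). -/
def spanning (A : Finset G.E) : SimpleGraph G.V :=
  SimpleGraph.fromRel (fun a b => ∃ e ∈ A, G.ends e = s(a, b))

/-- number of connected components of the spanning subgraph `(V, A)` -/
noncomputable def comps (A : Finset G.E) : ℕ :=
  Nat.card (G.spanning A).ConnectedComponent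

/-- rank of an edge subset: `|V| - c(A)` -/
noncomputable def rk (A : Finset G.E) : ℕ :=
  Fintype.card G.V - G.comps A

/-- The Tutte polynomial, as a polynomial in the variables `X 0 = x`, `X 1 = y`. -/
noncomputable def tutte : MvPolynomial (Fin 2) ℤ :=
  ∑ A : Finset G.E,
    (X 0 - 1) ^ (G.rk Finset.univ - G.rk A) * (X 1 - 1) ^ (A.card - G.rk A)

def Connected : Prop := (G.spanning Finset.univ).Connected

def IsLoop (e : G.E) : Prop := (G.ends e).IsDiag

def IsBridge (e : G.E) : Prop :=
  G.comps (Finset.univ.erase e) ≠ G.comps Finset.univ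

noncomputable def numLoops : ℕ := Nat.card {e : G.E // (G.ends e).IsDiag}

/-- delete a set of edges -/
def deleteSet (F : Finset G.E) : Multigraph where
  V := G.V
  E := {e : G.E // e ∉ F}
  ends := fun e => G.ends e.1

/-- delete one edge -/
def delete (e : G.E) : Multigraph := G.deleteSet {e}

/-- identify vertices along (the equivalence generated by) a relation `r` -/
noncomputable def identify (r : G.V → G.V → Prop) : Multigraph where
  V := Quotient (Relation.EqvGen.setoid r)
  E := G.E
  decEqV := Classical.decEq _
  ends := fun e => (G.ends e).map (Quotient.mk (Relation.EqvGen.setoid r))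

/-- contract an edge: delete it and identify its two endpoints -/
noncomputable def contract (e : G.E) : Multigraph :=
  (G.delete e).identify (fun a b => a ∈ G.ends e ∧ b ∈ G.ends e)

/-- the projection of a vertex of `G` to a vertex of `G/e` -/
noncomputable def cmk (e : G.E) : G.V → (G.contract e).V := fun v => Quotient.mk _ v

/-- restrict to the edges satisfying `P` (all vertices are kept) -/
noncomputable def edgeRestrict (P : G.E → Prop) : Multigraph where
  V := G.V
  E := {e : G.E // P e}
  ends := fun e => G.ends e.1

/-- add new edges indexed by `n` with prescribed endpoints -/
def addEdges (n : Type) [Fintype n] [DecidableEq n] (f : n → Sym2 G.V) :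
    Multigraph where
  V := G.V
  E := G.E ⊕ n
  ends := Sum.elim G.ends f

/-- disjoint union -/
def disjUnion (H : Multigraph) : Multigraph where
  V := G.V ⊕ H.V
  E := G.E ⊕ H.E
  ends := Sum.elim (fun e => (G.ends e).map Sum.inl) (fun e => (H.ends e).map Sum.inr)

/-- the gluing `G(u_1,…,u_k) ⊔ H(w_1,…,w_k)`: disjoint union with `u i`
identified with `w i` for each `i` -/
noncomputable def glue (H : Multigraph) {k : ℕ} (u : Fin k → G.V) (w : Fin k → H.V) :
    Multigraph :=
  (G.disjUnion H).identify
    (fun a b => ∃ i : Fin k, a = Sum.inl (u i) ∧ b = Sum.inr (w i))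

/-- projection from `G.V ⊕ H.V` to the vertices of the gluing -/
noncomputable def glueMk (H : Multigraph) {k : ℕ} (u : Fin k → G.V) (w : Fin k → H.V) :
    G.V ⊕ H.V → (G.glue H u w).V := fun a => Quotient.mk _ a

end Multigraph

/-- `σ` is an isomorphism of multigraphs: a vertex bijection preserving
edge multiplicities between every pair of vertices. -/
def Multigraph.IsIsoMap (G H : Multigraph) (σ : G.V ≃ H.V) : Prop :=
  ∀ p : Sym2 G.V,
    Nat.card {e : G.E // G.ends e = p} = Nat.card {e : H.E // H.ends e = p.map σ}

/-- `G` and `H` are isomorphic multigraphs -/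
def Multigraph.Iso (G H : Multigraph) : Prop := ∃ σ : G.V ≃ H.V, G.IsIsoMap H σ

/-- `σ` is an automorphism of `G` -/
def Multigraph.IsAuto (G : Multigraph) (σ : G.V ≃ G.V) : Prop := G.IsIsoMap G σ

/-- `Q` is a partition of the type `α` -/
def IsPartitionUniv {α : Type} (Q : Finset (Finset α)) : Prop :=
  (∀ B ∈ Q, B.Nonempty) ∧ ∀ i : α, ∃! B, B ∈ Q ∧ i ∈ B
section Helpers

open Relation Sum

/-- transport EqvGen along a map sending the base relation into another. -/
lemma eqvgen_map {α β : Type*} (m : α → β) {r : α → α → Prop} {r' : β → β → Prop}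
    (h : ∀ a b, r a b → r' (m a) (m b)) {a b : α} (hab : Relation.EqvGen r a b) :
    Relation.EqvGen r' (m a) (m b) := by
  induction hab with
  | rel x y hxy => exact EqvGen.rel _ _ (h _ _ hxy)
  | refl x => exact EqvGen.refl _
  | symm x y _ ih => exact EqvGen.symm _ _ ih
  | trans x y z _ _ ih1 ih2 => exact EqvGen.trans _ _ _ ih1 ih2

lemma eqvgen_constant {α β : Type*} (m : α → β) {r : α → α → Prop}
    (h : ∀ a b, r a b → m a = m b) {a b : α} (hab : Relation.EqvGen r a b) :
    m a = m b := by
  induction hab with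
  | rel x y hxy => exact h _ _ hxy
  | refl x => rfl
  | symm x y _ ih => exact ih.symm
  | trans x y z _ _ ih1 ih2 => exact ih1.trans ih2

lemma sym2_map_symm {α β : Type*} (σ : α ≃ β) (p : Sym2 α) :
    (p.map σ).map σ.symm = p := by
  rw [Sym2.map_map]; simp

/-- extend an equivalence on complements of singletons, plus an equivalence on the
second summands, to an equivalence of sum types. -/
noncomputable def sumExtend {A B C D : Type} [DecidableEq A] [DecidableEq C]
    (e : A) (f : C)
    (t : {x : A // x ∉ ({e} : Finset A)} ≃ {y : C // y ∉ ({f} : Finset C)})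
    (s : B ≃ D) : A ⊕ B ≃ C ⊕ D where
  toFun z :=
    match z with
    | inl a => if h : a = e then inl f else inl (t ⟨a, by simp [h]⟩).1
    | inr b => inr (s b)
  invFun z :=
    match z with
    | inl c => if h : c = f then inl e else inl (t.symm ⟨c, by simp [h]⟩).1
    | inr d => inr (s.symm d)
  left_inv := by
    rintro (a | b)
    · by_cases h : a = e
      · subst h; simp
      · have h2 : (t ⟨a, by simp [h]⟩).1 ≠ f := by
          have := (t ⟨a, by simp [h]⟩).2; simpa using this
        simp only [dif_neg h, dif_neg h2]
        congr 1
        have : (⟨(t ⟨a, by simp [h]⟩).1, by simp [h2]⟩ :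
            {y : C // y ∉ ({f} : Finset C)}) = t ⟨a, by simp [h]⟩ := rfl
        rw [this, Equiv.symm_apply_apply]
    · simp
  right_inv := by
    rintro (c | d)
    · by_cases h : c = f
      · subst h; simp
      · have h2 : (t.symm ⟨c, by simp [h]⟩).1 ≠ e := by
          have := (t.symm ⟨c, by simp [h]⟩).2; simpa using this
        simp only [dif_neg h, dif_neg h2]
        congr 1
        have : (⟨(t.symm ⟨c, by simp [h]⟩).1, by simp [h2]⟩ :
            {x : A // x ∉ ({e} : Finset A)}) = t.symm ⟨c, by simp [h]⟩ := rfl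
        rw [this, Equiv.apply_symm_apply]
    · simp

lemma sumExtend_e {A B C D : Type} [DecidableEq A] [DecidableEq C] (e : A) (f : C)
    (t : {x : A // x ∉ ({e} : Finset A)} ≃ {y : C // y ∉ ({f} : Finset C)})
    (s : B ≃ D) : sumExtend e f t s (inl e) = inl f := by
  simp [sumExtend]

lemma sumExtend_ne {A B C D : Type} [DecidableEq A] [DecidableEq C] (e : A) (f : C)
    (t : {x : A // x ∉ ({e} : Finset A)} ≃ {y : C // y ∉ ({f} : Finset C)})
    (s : B ≃ D) (a : A) (h : a ≠ e) :
    sumExtend e f t s (inl a) = inl (t ⟨a, by simp [h]⟩).1 := by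
  simp [sumExtend, h]

lemma sumExtend_inr {A B C D : Type} [DecidableEq A] [DecidableEq C] (e : A) (f : C)
    (t : {x : A // x ∉ ({e} : Finset A)} ≃ {y : C // y ∉ ({f} : Finset C)})
    (s : B ≃ D) (b : B) : sumExtend e f t s (inr b) = inr (s b) := rfl

end Helpers
namespace Multigraph

lemma isIsoMap_of_edgeEquiv (G H : Multigraph) (σ : G.V ≃ H.V) (θ : G.E ≃ H.E)
    (h : ∀ e, H.ends (θ e) = (Sym2.map σ) (G.ends e)) : G.IsIsoMap H σ := by
  intro p
  apply Nat.card_congr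
  refine Equiv.subtypeEquiv θ (fun e => ?_)
  rw [h]
  constructor
  · rintro rfl; rfl
  · intro he
    exact Sym2.map.injective σ.injective he

lemma exists_edgeEquiv (G H : Multigraph) (σ : G.V ≃ H.V) (hσ : G.IsIsoMap H σ) :
    ∃ θ : G.E ≃ H.E, ∀ e, H.ends (θ e) = (Sym2.map σ) (G.ends e) := by
  classical
  have key : ∀ c : Sym2 G.V,
      Nonempty ({a : G.E // G.ends a = c} ≃ {b : H.E // (Sym2.map σ.symm) (H.ends b) = c}) := by
    intro c
    have h1 : Nat.card {e : G.E // G.ends e = c} =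
        Nat.card {e' : H.E // H.ends e' = Sym2.map σ c} := hσ c
    have h2 : {b : H.E // (Sym2.map σ.symm) (H.ends b) = c} ≃
        {e' : H.E // H.ends e' = Sym2.map σ c} := by
      refine Equiv.subtypeEquivRight (fun b => ?_)
      constructor
      · rintro rfl; rw [Sym2.map_map]; simp
      · intro hb; rw [hb, Sym2.map_map]; simp
    refine ⟨(Fintype.equivOfCardEq ?_).trans h2.symm⟩
    have := h1
    simpa [Nat.card_eq_fintype_card] using this
  let θ := Equiv.ofFiberEquiv (f := G.ends) (g := fun b => (Sym2.map σ.symm) (H.ends b))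
    (fun c => (key c).some)
  refine ⟨θ, fun a => ?_⟩
  have := Equiv.ofFiberEquiv_map (f := G.ends) (g := fun b => (Sym2.map σ.symm) (H.ends b))
    (fun c => (key c).some) a
  have h3 : Sym2.map (⇑σ) (Sym2.map (⇑σ.symm) (H.ends (θ a))) = Sym2.map (⇑σ) (G.ends a) := by
    rw [this]
  rwa [Sym2.map_map, show (⇑σ ∘ ⇑σ.symm) = id from funext (fun x => σ.apply_symm_apply x),
    Sym2.map_id, id_eq] at h3

end Multigraph
namespace Multigraph

lemma comps_eq_of_spanning_iso (G H : Multigraph) (σ : G.V ≃ H.V)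
    (A : Finset G.E) (B : Finset H.E)
    (h : ∀ a b : G.V, (∃ x ∈ A, G.ends x = s(a, b)) ↔ (∃ y ∈ B, H.ends y = s(σ a, σ b))) :
    G.comps A = H.comps B := by
  have iso : G.spanning A ≃g H.spanning B := by
    refine ⟨σ, fun {a b} => ?_⟩
    simp only [spanning, SimpleGraph.fromRel_adj]
    rw [← h a b, ← h b a]
    simp [σ.injective.ne_iff, ne_comm, eq_comm]
  exact Nat.card_congr iso.connectedComponentEquiv

lemma comps_le_card (G : Multigraph) (A : Finset G.E) :
    G.comps A ≤ Fintype.card G.V := by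
  have h : Function.Surjective (G.spanning A).connectedComponentMk :=
    fun c => c.exists_rep
  calc G.comps A = Nat.card (G.spanning A).ConnectedComponent := rfl
    _ ≤ Nat.card G.V := Nat.card_le_card_of_surjective _ h
    _ = Fintype.card G.V := Nat.card_eq_fintype_card

lemma contract_ends (G : Multigraph) (e : G.E) (x : (G.contract e).E) :
    (G.contract e).ends x = Sym2.map (G.cmk e) (G.ends x.1) := rfl

lemma glue_ends_inl (G W : Multigraph) {k : ℕ} (u : Fin k → G.V) (w : Fin k → W.V)
    (a : G.E) :
    (G.glue W u w).ends (Sum.inl a) =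
      Sym2.map (fun x => G.glueMk W u w (Sum.inl x)) (G.ends a) := by
  show Sym2.map _ (Sym2.map _ (G.ends a)) = _
  exact (Sym2.map_map ..).trans rfl

lemma glue_ends_inr (G W : Multigraph) {k : ℕ} (u : Fin k → G.V) (w : Fin k → W.V)
    (b : W.E) :
    (G.glue W u w).ends (Sum.inr b) =
      Sym2.map (fun x => G.glueMk W u w (Sum.inr x)) (W.ends b) := by
  show Sym2.map _ (Sym2.map _ (W.ends b)) = _
  exact (Sym2.map_map ..).trans rfl

/-- the vertex set of a contraction of a non-loop edge: an explicit equivalence -/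
noncomputable def contractVEquiv (G : Multigraph) (e : G.E) (x y : G.V)
    (hx : G.ends e = s(x, y)) (hxy : x ≠ y) :
    (G.contract e).V ≃ {v : G.V // v ≠ y} where
  toFun := Quotient.lift (fun v => if h : v = y then ⟨x, hxy⟩ else ⟨v, h⟩) (by
    intro a b hab
    have hcon : ∀ a b : G.V, (a ∈ G.ends e ∧ b ∈ G.ends e) →
        (fun v => if h : v = y then (⟨x, hxy⟩ : {v : G.V // v ≠ y}) else ⟨v, h⟩) a =
          (fun v => if h : v = y then (⟨x, hxy⟩ : {v : G.V // v ≠ y}) else ⟨v, h⟩) b := by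
      rintro a b ⟨ha, hb⟩
      rw [hx, Sym2.mem_iff] at ha hb
      have key : ∀ c : G.V, c = x ∨ c = y →
          (if h : c = y then (⟨x, hxy⟩ : {v : G.V // v ≠ y}) else ⟨c, h⟩) = ⟨x, hxy⟩ := by
        rintro c (rfl | rfl)
        · simp [hxy]
        · simp
      simp only []
      rw [key a ha, key b hb]
    convert eqvgen_constant (r := fun a b => a ∈ G.ends e ∧ b ∈ G.ends e)
      (fun v => if h : v = y then (⟨x, hxy⟩ : {v : G.V // v ≠ y}) else ⟨v, h⟩) hcon hab <;> rfl)
  invFun := fun v => Quotient.mk _ v.1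
  left_inv := by
    refine Quotient.ind (fun v => ?_)
    by_cases h : v = y
    · subst h
      simp only [Quotient.lift_mk, dif_pos]
      refine Quotient.sound (Relation.EqvGen.rel _ _
        ⟨by rw [hx]; exact Sym2.mem_mk_left _ _, by rw [hx]; exact Sym2.mem_mk_right _ _⟩)
    · simp only [Quotient.lift_mk, dif_neg h]
      rfl
  right_inv := by
    rintro ⟨v, hv⟩
    exact dif_neg hv

lemma card_contract (G : Multigraph) (e : G.E) (x y : G.V)
    (hx : G.ends e = s(x, y)) (hxy : x ≠ y) :
    Fintype.card (G.contract e).V + 1 = Fintype.card G.V := by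
  classical
  rw [Fintype.card_congr (G.contractVEquiv e x y hx hxy)]
  have h1 : Fintype.card {v : G.V // v ≠ y} + Fintype.card {v : G.V // v = y}
      = Fintype.card G.V := by
    rw [add_comm, Fintype.card_subtype_compl (p := fun v => v = y)]
    have : Fintype.card {v : G.V // v = y} ≤ Fintype.card G.V := by
      convert Fintype.card_subtype_le (fun v => v = y)
    omega
  rw [Fintype.card_subtype_eq] at h1
  exact h1

end Multigraph
lemma walk_constant {V β : Type*} {Gr : SimpleGraph V} (f : V → β)
    (h : ∀ a b, Gr.Adj a b → f a = f b) {a b : V} (p : Gr.Walk a b) : f a = f b := by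
  induction p with
  | nil => rfl
  | cons had _ ih => exact (h _ _ had).trans ih

/-- lift a function constant on adjacent vertices to connected components -/
noncomputable def ccLift {V β : Type*} (Gr : SimpleGraph V) (f : V → β)
    (h : ∀ a b, Gr.Adj a b → f a = f b) : Gr.ConnectedComponent → β :=
  SimpleGraph.ConnectedComponent.lift f (fun _ _ p _ => walk_constant f h p)

@[simp] lemma ccLift_mk {V β : Type*} (Gr : SimpleGraph V) (f : V → β)
    (h : ∀ a b, Gr.Adj a b → f a = f b) (v : V) :
    ccLift Gr f h (Gr.connectedComponentMk v) = f v := rfl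

namespace Multigraph

lemma comps_contract (G : Multigraph) (e : G.E) (x y : G.V)
    (hx : G.ends e = s(x, y)) (hxy : x ≠ y) (Bc : Finset (G.contract e).E) :
    G.comps (insert e (Bc.image (fun z => z.1))) = (G.contract e).comps Bc := by
  classical
  set q : G.V → (G.contract e).V := G.cmk e with hq
  set S : Finset G.E := insert e (Bc.image (fun z => z.1)) with hS
  set Γ := G.spanning S with hΓ
  set Δ := (G.contract e).spanning Bc with hΔ
  have qeq : ∀ a b : G.V, a ∈ G.ends e → b ∈ G.ends e → q a = q b := by
    intro a b ha hb
    exact Quotient.sound (Relation.EqvGen.rel a b ⟨ha, hb⟩)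
  have ΓAdj_xy : Γ.Adj x y := by
    rw [hΓ]
    simp only [spanning, SimpleGraph.fromRel_adj]
    exact ⟨hxy, Or.inl ⟨e, Finset.mem_insert_self _ _, hx⟩⟩
  -- the downward map on vertices
  have g0wd : ∀ a b : (G.delete e).V,
      (Relation.EqvGen.setoid (fun a b => a ∈ G.ends e ∧ b ∈ G.ends e)).r a b →
      Γ.connectedComponentMk a = Γ.connectedComponentMk b := by
    intro a b hab
    refine eqvgen_constant (fun v => Γ.connectedComponentMk v) ?_ hab
    rintro a b ⟨ha, hb⟩
    rw [hx, Sym2.mem_iff] at ha hb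
    have hxyc : Γ.connectedComponentMk x = Γ.connectedComponentMk y :=
      SimpleGraph.ConnectedComponent.connectedComponentMk_eq_of_adj ΓAdj_xy
    rcases ha with rfl | rfl <;> rcases hb with rfl | rfl <;>
      simp [hxyc]
  set g0 : (G.contract e).V → Γ.ConnectedComponent :=
    Quotient.lift (fun v => Γ.connectedComponentMk v) g0wd with hg0
  -- core adjacency transfers
  have coreDown : ∀ a b : (G.contract e).V, a ≠ b →
      (∃ z ∈ Bc, (G.contract e).ends z = s(a, b)) → g0 a = g0 b := by
    rintro a b hab ⟨z, hz, hzab⟩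
    obtain ⟨c, d, hcd⟩ : ∃ c d, G.ends z.1 = s(c, d) :=
      Sym2.ind (fun c d => ⟨c, d, rfl⟩) (G.ends z.1)
    rw [contract_ends, hcd] at hzab
    have hedge : z.1 ∈ S := by
      rw [hS]
      exact Finset.mem_insert_of_mem (Finset.mem_image.mpr ⟨z, hz, rfl⟩)
    have hmkcd : ∀ c' d' : G.V, c' ≠ d' → G.ends z.1 = s(c', d') →
        Γ.connectedComponentMk c' = Γ.connectedComponentMk d' := by
      intro c' d' hne hends
      refine SimpleGraph.ConnectedComponent.connectedComponentMk_eq_of_adj ?_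
      rw [hΓ]
      simp only [spanning, SimpleGraph.fromRel_adj]
      exact ⟨hne, Or.inl ⟨z.1, hedge, hends⟩⟩
    simp only [Sym2.map_pair_eq, Sym2.eq_iff] at hzab
    rcases hzab with ⟨hca, hdb⟩ | ⟨hcb, hda⟩
    · have hne : c ≠ d := fun h => hab (by rw [← hca, ← hdb, h])
      rw [← hca, ← hdb]
      exact hmkcd c d hne hcd
    · have hne : c ≠ d := fun h => hab (by rw [← hda, ← hcb, h])
      rw [← hcb, ← hda]
      exact (hmkcd c d hne hcd).symm
  have g0adj : ∀ a b : (G.contract e).V, Δ.Adj a b → g0 a = g0 b := by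
    intro a b hab
    rw [hΔ] at hab
    simp only [spanning, SimpleGraph.fromRel_adj] at hab
    obtain ⟨hne, h1 | h1⟩ := hab
    · exact coreDown a b hne h1
    · exact (coreDown b a (Ne.symm hne) h1).symm
  have qadj : ∀ a b : G.V, Γ.Adj a b →
      Δ.connectedComponentMk (q a) = Δ.connectedComponentMk (q b) := by
    intro a b hab
    rw [hΓ] at hab
    simp only [spanning, SimpleGraph.fromRel_adj] at hab
    obtain ⟨hne, h1 | h1⟩ := hab
    all_goals {
      obtain ⟨e', he'S, he'ab⟩ := h1
      rw [hS, Finset.mem_insert] at he'S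
      rcases he'S with rfl | he'B
      · -- the contracted edge
        have hmem : ∀ c : G.V, c ∈ G.ends e' → True := fun _ _ => trivial
        have hqab : q a = q b := by
          apply qeq <;> rw [he'ab] <;> simp [Sym2.mem_iff]
        rw [hqab]
      · obtain ⟨z, hz, hz1⟩ := Finset.mem_image.mp he'B
        by_cases hq2 : q a = q b
        · rw [hq2]
        · refine SimpleGraph.ConnectedComponent.connectedComponentMk_eq_of_adj ?_
          rw [hΔ]
          simp only [spanning, SimpleGraph.fromRel_adj]
          refine ⟨hq2, Or.inl ⟨z, hz, ?_⟩⟩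
          rw [contract_ends, hz1, he'ab]
          first
            | exact rfl
            | (rw [Sym2.map_pair_eq]; exact Sym2.eq_swap)
    }
  set φdown : Δ.ConnectedComponent → Γ.ConnectedComponent := ccLift Δ g0 g0adj with hφd
  set φup : Γ.ConnectedComponent → Δ.ConnectedComponent :=
    ccLift Γ (fun v => Δ.connectedComponentMk (q v)) qadj with hφu
  have main : Δ.ConnectedComponent ≃ Γ.ConnectedComponent := by
    refine ⟨φdown, φup, ?_, ?_⟩
    · refine SimpleGraph.ConnectedComponent.ind ?_
      refine Quotient.ind ?_
      intro v
      rfl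
    · refine SimpleGraph.ConnectedComponent.ind ?_
      intro v
      rfl
  show Nat.card Γ.ConnectedComponent = Nat.card Δ.ConnectedComponent
  exact Nat.card_congr main.symm

end Multigraph
/-- restrict an equivalence matching `a ↦ b` to complements of singletons -/
noncomputable def restrictE {A C : Type} [DecidableEq A] [DecidableEq C]
    (c : A ≃ C) (a : A) (b : C) (hab : c a = b) :
    {x : A // x ∉ ({a} : Finset A)} ≃ {y : C // y ∉ ({b} : Finset C)} where
  toFun x := ⟨c x.1, by
    have hx := x.2
    simp only [Finset.mem_singleton] at *
    intro h
    exact hx (c.injective (h.trans hab.symm))⟩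
  invFun y := ⟨c.symm y.1, by
    have hy := y.2
    simp only [Finset.mem_singleton] at *
    intro h
    have h2 := congrArg c h
    rw [Equiv.apply_symm_apply] at h2
    exact hy (h2.trans hab)⟩
  left_inv x := by
    apply Subtype.ext
    simp
  right_inv y := by
    apply Subtype.ext
    simp

lemma image_val_subtype {α : Type} [DecidableEq α] (s : Finset α) (a : α) (ha : a ∉ s) :
    ((s.subtype (fun z => z ∉ ({a} : Finset α))).image (fun z => z.1)) = s := by
  ext x
  simp only [Finset.mem_image, Finset.mem_subtype, Finset.mem_singleton]
  constructor
  · rintro ⟨y, hy, rfl⟩; exact hy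
  · intro hx
    refine ⟨⟨x, ?_⟩, hx, rfl⟩
    simp only [Finset.mem_singleton]
    rintro rfl
    exact ha hx

namespace Multigraph

lemma rk_contract_succ (G : Multigraph) (e : G.E) (x y : G.V)
    (hx : G.ends e = s(x, y)) (hxy : x ≠ y) (Bc : Finset (G.contract e).E) :
    G.rk (insert e (Bc.image (fun z => z.1))) = (G.contract e).rk Bc + 1 := by
  have h1 := G.comps_contract e x y hx hxy Bc
  have h2 := G.card_contract e x y hx hxy
  have h3 := (G.contract e).comps_le_card Bc
  unfold rk
  omega

end Multigraph

/-- gluing a rotationally symmetric gadget `W` along a directed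
cycle of `D_ψ` produces a new quadruple with isomorphic deletions and
contractions, hence equal Tutte polynomials.  An arc `i → j` of `D_ψ` means
that `ψ` sends the image of `u i` in `G/e` to the image of `v j` in `H/f`. -/
theorem stmt_14 (G H : Multigraph) {n : ℕ}
    (hGc : G.Connected) (hHc : H.Connected)
    (hGl : ∀ e : G.E, ¬ G.IsLoop e) (hHl : ∀ f : H.E, ¬ H.IsLoop f)
    (u : Fin n → G.V) (v : Fin n → H.V)
    (hu : Function.Bijective u) (hv : Function.Bijective v)
    (e : G.E) (f : H.E) (s1 s2 t1 t2 : Fin n) (hs : s1 ≠ s2) (ht : t1 ≠ t2)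
    (he : G.ends e = s(u s1, u s2)) (hf : H.ends f = s(v t1, v t2))
    (σ : G.V ≃ H.V) (hσu : ∀ i, σ (u i) = v i)
    (hσ : Multigraph.IsIsoMap (G.delete e) (H.delete f) σ)
    (ψ : (G.contract e).V ≃ (H.contract f).V)
    (hψ : Multigraph.IsIsoMap (G.contract e) (H.contract f) ψ)
    {k : ℕ} [NeZero k] (π : Fin k → Fin n) (hπ : Function.Injective π)
    (hcyc : ∀ l : Fin k, ψ (G.cmk e (u (π l))) = H.cmk f (v (π (l + 1))))
    (W : Multigraph) (w : Fin k → W.V) (hw : Function.Injective w)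
    (ξ : W.V ≃ W.V) (hξ : W.IsAuto ξ) (hξw : ∀ j : Fin k, ξ (w j) = w (j + 1)) :
    Multigraph.Iso ((G.glue W (fun j => u (π j)) w).delete (Sum.inl e))
        ((H.glue W (fun j => v (π j)) w).delete (Sum.inl f)) ∧
      Multigraph.Iso ((G.glue W (fun j => u (π j)) w).contract (Sum.inl e))
        ((H.glue W (fun j => v (π j)) w).contract (Sum.inl f)) ∧
      (G.glue W (fun j => u (π j)) w).tutte = (H.glue W (fun j => v (π j)) w).tutte := by

  classical
  set u' : Fin k → G.V := fun j => u (π j) with hu'def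
  set v' : Fin k → H.V := fun j => v (π j) with hv'def
  set G' : Multigraph := G.glue W u' w with hG'def
  set H' : Multigraph := H.glue W v' w with hH'def
  set qG : G.V ⊕ W.V → G'.V := G.glueMk W u' w with hqGdef
  set qH : H.V ⊕ W.V → H'.V := H.glueMk W v' w with hqHdef
  -- the vertex bijection for the deletion
  have hfwd : ∀ a b : G.V ⊕ W.V,
      (∃ i : Fin k, a = Sum.inl (u' i) ∧ b = Sum.inr (w i)) →
      (∃ i : Fin k, Sum.map (⇑σ) id a = Sum.inl (v' i) ∧
        Sum.map (⇑σ) id b = Sum.inr (w i)) := by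
    rintro a b ⟨i, rfl, rfl⟩
    exact ⟨i, by simp [hσu, hu'def, hv'def], by simp⟩
  have hbwd : ∀ a b : H.V ⊕ W.V,
      (∃ i : Fin k, a = Sum.inl (v' i) ∧ b = Sum.inr (w i)) →
      (∃ i : Fin k, Sum.map (⇑σ.symm) id a = Sum.inl (u' i) ∧
        Sum.map (⇑σ.symm) id b = Sum.inr (w i)) := by
    rintro a b ⟨i, rfl, rfl⟩
    refine ⟨i, ?_, by simp⟩
    show Sum.inl (σ.symm (v (π i))) = _
    rw [← hσu, Equiv.symm_apply_apply]
  have cancel1 : ∀ z : G.V ⊕ W.V, Sum.map (⇑σ.symm) id (Sum.map (⇑σ) id z) = z := by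
    rintro (x | y) <;> simp
  have cancel2 : ∀ z : H.V ⊕ W.V, Sum.map (⇑σ) id (Sum.map (⇑σ.symm) id z) = z := by
    rintro (x | y) <;> simp
  set σ' : G'.V ≃ H'.V := {
    toFun := Quotient.map (Sum.map (⇑σ) id)
      (fun a b h => eqvgen_map
        (r' := fun a b => ∃ i : Fin k, a = Sum.inl (v' i) ∧ b = Sum.inr (w i))
        (Sum.map (⇑σ) id) hfwd h)
    invFun := Quotient.map (Sum.map (⇑σ.symm) id)
      (fun a b h => eqvgen_map
        (r' := fun a b => ∃ i : Fin k, a = Sum.inl (u' i) ∧ b = Sum.inr (w i))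
        (Sum.map (⇑σ.symm) id) hbwd h)
    left_inv := by
      refine Quotient.ind (fun z => ?_)
      show Quotient.mk _ (Sum.map (⇑σ.symm) id (Sum.map (⇑σ) id z)) = Quotient.mk _ z
      rw [cancel1 z]
      rfl
    right_inv := by
      refine Quotient.ind (fun z => ?_)
      show Quotient.mk _ (Sum.map (⇑σ) id (Sum.map (⇑σ.symm) id z)) = Quotient.mk _ z
      rw [cancel2 z]
      rfl } with hσ'def
  have hσ'mk : ∀ z : G.V ⊕ W.V, σ' (qG z) = qH (Sum.map (⇑σ) id z) := fun z => rfl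
  have hσ'inl : ∀ x : G.V, σ' (qG (Sum.inl x)) = qH (Sum.inl (σ x)) := fun x => rfl
  have hσ'inr : ∀ y : W.V, σ' (qG (Sum.inr y)) = qH (Sum.inr y) := fun y => rfl
  -- injectivity of the glue projection on each side
  have hinjlG : ∀ a b : G.V, qG (Sum.inl a) = qG (Sum.inl b) → a = b := by
    intro a b hab
    set nor : G.V ⊕ W.V → G.V ⊕ W.V := Sum.elim (fun x => Sum.inl x)
      (fun y => if h : ∃ j : Fin k, w j = y then Sum.inl (u' h.choose) else Sum.inr y)
      with hnordef
    have hnor : ∀ a b : G.V ⊕ W.V,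
        (∃ i : Fin k, a = Sum.inl (u' i) ∧ b = Sum.inr (w i)) → nor a = nor b := by
      rintro a b ⟨i, rfl, rfl⟩
      have hex : ∃ j : Fin k, w j = w i := ⟨i, rfl⟩
      have hch : hex.choose = i := hw hex.choose_spec
      rw [hnordef]
      simp only [Sum.elim_inl, Sum.elim_inr, dif_pos hex, hch]
    have h2 := eqvgen_constant nor hnor (Quotient.exact hab)
    rw [hnordef] at h2
    simp only [Sum.elim_inl] at h2
    exact Sum.inl_injective h2
  have hinjlH : ∀ a b : H.V, qH (Sum.inl a) = qH (Sum.inl b) → a = b := by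
    intro a b hab
    set nor : H.V ⊕ W.V → H.V ⊕ W.V := Sum.elim (fun x => Sum.inl x)
      (fun y => if h : ∃ j : Fin k, w j = y then Sum.inl (v' h.choose) else Sum.inr y)
      with hnordef
    have hnor : ∀ a b : H.V ⊕ W.V,
        (∃ i : Fin k, a = Sum.inl (v' i) ∧ b = Sum.inr (w i)) → nor a = nor b := by
      rintro a b ⟨i, rfl, rfl⟩
      have hex : ∃ j : Fin k, w j = w i := ⟨i, rfl⟩
      have hch : hex.choose = i := hw hex.choose_spec
      rw [hnordef]
      simp only [Sum.elim_inl, Sum.elim_inr, dif_pos hex, hch]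
    have h2 := eqvgen_constant nor hnor (Quotient.exact hab)
    rw [hnordef] at h2
    simp only [Sum.elim_inl] at h2
    exact Sum.inl_injective h2
  -- the endpoints of the special edges in the glued graphs
  have hG'ends : G'.ends (Sum.inl e) = s(qG (Sum.inl (u s1)), qG (Sum.inl (u s2))) := by
    show (G.glue W u' w).ends (Sum.inl e) = _
    rw [Multigraph.glue_ends_inl, he, Sym2.map_pair_eq]
  have hH'ends : H'.ends (Sum.inl f) = s(qH (Sum.inl (v t1)), qH (Sum.inl (v t2))) := by
    show (H.glue W v' w).ends (Sum.inl f) = _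
    rw [Multigraph.glue_ends_inl, hf, Sym2.map_pair_eq]
  have hndG : qG (Sum.inl (u s1)) ≠ qG (Sum.inl (u s2)) := by
    intro hcon
    exact hs (hu.1 (hinjlG _ _ hcon))
  have hndH : qH (Sum.inl (v t1)) ≠ qH (Sum.inl (v t2)) := by
    intro hcon
    exact ht (hv.1 (hinjlH _ _ hcon))
  -- edge equivalences from the hypotheses
  obtain ⟨θ0, hθ0⟩ := Multigraph.exists_edgeEquiv (G.delete e) (H.delete f) σ hσ
  obtain ⟨θψ, hθψ⟩ := Multigraph.exists_edgeEquiv (G.contract e) (H.contract f) ψ hψ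
  obtain ⟨θξ, hθξ⟩ := Multigraph.exists_edgeEquiv W W ξ hξ
  have hθ0' : ∀ a : (G.delete e).E, H.ends (θ0 a).1 = Sym2.map (⇑σ) (G.ends a.1) :=
    fun a => hθ0 a
  have hθψ' : ∀ a : (G.contract e).E,
      Sym2.map (H.cmk f) (H.ends (θψ a).1) =
        Sym2.map (⇑ψ) (Sym2.map (G.cmk e) (G.ends a.1)) :=
    fun a => hθψ a
  set ced : G.E ⊕ W.E ≃ H.E ⊕ W.E := sumExtend e f θ0 (Equiv.refl W.E) with hceddef
  set cec : G.E ⊕ W.E ≃ H.E ⊕ W.E := sumExtend e f θψ θξ with hcecdef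
  have hcedE : ced (Sum.inl e) = Sum.inl f := sumExtend_e e f θ0 (Equiv.refl W.E)
  have hcecE : cec (Sum.inl e) = Sum.inl f := sumExtend_e e f θψ θξ
  have hced : ∀ z : G.E ⊕ W.E, z ≠ Sum.inl e →
      H'.ends (ced z) = Sym2.map (⇑σ') (G'.ends z) := by
    rintro (a | b) hz
    · have ha : a ≠ e := fun h => hz (by rw [h])
      rw [hceddef, sumExtend_ne e f θ0 (Equiv.refl W.E) a ha]
      show (H.glue W v' w).ends (Sum.inl ((θ0 ⟨a, by simp [ha]⟩).1)) =
        Sym2.map (⇑σ') ((G.glue W u' w).ends (Sum.inl a))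
      rw [Multigraph.glue_ends_inl, Multigraph.glue_ends_inl, hθ0' ⟨a, by simp [ha]⟩,
        Sym2.map_map, Sym2.map_map]
      rfl
    · show (H.glue W v' w).ends (Sum.inr b) =
        Sym2.map (⇑σ') ((G.glue W u' w).ends (Sum.inr b))
      rw [Multigraph.glue_ends_inr, Multigraph.glue_ends_inr, Sym2.map_map]
      rfl
  -- the contraction quotient maps
  set cqG : G'.V → (G'.contract (Sum.inl e)).V := G'.cmk (Sum.inl e) with hcqGdef
  set cqH : H'.V → (H'.contract (Sum.inl f)).V := H'.cmk (Sum.inl f) with hcqHdef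
  set mkkG : G.V ⊕ W.V → (G'.contract (Sum.inl e)).V := fun z => cqG (qG z) with hmkkGdef
  set mkkH : H.V ⊕ W.V → (H'.contract (Sum.inl f)).V := fun z => cqH (qH z) with hmkkHdef
  -- ιG, ιH : maps from the small contractions into the glued contractions
  have wdιH : ∀ a b : (H.delete f).V,
      (Relation.EqvGen.setoid (fun a b => a ∈ H.ends f ∧ b ∈ H.ends f)) a b →
      mkkH (Sum.inl a) = mkkH (Sum.inl b) := by
    intro a b hab
    refine eqvgen_constant (fun h0 => mkkH (Sum.inl h0)) ?_ hab
    rintro a b ⟨ha, hb⟩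
    rw [hf, Sym2.mem_iff] at ha hb
    have key : mkkH (Sum.inl (v t1)) = mkkH (Sum.inl (v t2)) := by
      refine Quotient.sound (Relation.EqvGen.rel _ _ ⟨?_, ?_⟩)
      · rw [hH'ends]; exact Sym2.mem_mk_left _ _
      · rw [hH'ends]; exact Sym2.mem_mk_right _ _
    rcases ha with rfl | rfl <;> rcases hb with rfl | rfl <;> simp [key]
  have wdιG : ∀ a b : (G.delete e).V,
      (Relation.EqvGen.setoid (fun a b => a ∈ G.ends e ∧ b ∈ G.ends e)) a b →
      mkkG (Sum.inl a) = mkkG (Sum.inl b) := by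
    intro a b hab
    refine eqvgen_constant (fun g0 => mkkG (Sum.inl g0)) ?_ hab
    rintro a b ⟨ha, hb⟩
    rw [he, Sym2.mem_iff] at ha hb
    have key : mkkG (Sum.inl (u s1)) = mkkG (Sum.inl (u s2)) := by
      refine Quotient.sound (Relation.EqvGen.rel _ _ ⟨?_, ?_⟩)
      · rw [hG'ends]; exact Sym2.mem_mk_left _ _
      · rw [hG'ends]; exact Sym2.mem_mk_right _ _
    rcases ha with rfl | rfl <;> rcases hb with rfl | rfl <;> simp [key]
  set ιH : (H.contract f).V → (H'.contract (Sum.inl f)).V :=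
    Quotient.lift (fun h0 => mkkH (Sum.inl h0)) wdιH with hιHdef
  set ιG : (G.contract e).V → (G'.contract (Sum.inl e)).V :=
    Quotient.lift (fun g0 => mkkG (Sum.inl g0)) wdιG with hιGdef
  have hcycu' : ∀ l : Fin k, ψ (G.cmk e (u' l)) = H.cmk f (v' (l + 1)) := fun l => hcyc l
  have hcyc' : ∀ l : Fin k, ψ.symm (H.cmk f (v' l)) = G.cmk e (u' (l - 1)) := by
    intro l
    have h1 := hcycu' (l - 1)
    rw [sub_add_cancel] at h1
    rw [← h1, Equiv.symm_apply_apply]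
  have hξw' : ∀ j : Fin k, ξ.symm (w j) = w (j - 1) := by
    intro j
    have h1 := hξw (j - 1)
    rw [sub_add_cancel] at h1
    rw [← h1, Equiv.symm_apply_apply]
  -- forward map on contracted vertices
  set F : G.V ⊕ W.V → (H'.contract (Sum.inl f)).V :=
    Sum.elim (fun g0 => ιH (ψ (G.cmk e g0))) (fun y0 => mkkH (Sum.inr (ξ y0))) with hFdef
  have wd1 : ∀ a b : (G.disjUnion W).V,
      (Relation.EqvGen.setoid
        (fun a b => ∃ i : Fin k, a = Sum.inl (u' i) ∧ b = Sum.inr (w i))) a b →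
      F a = F b := by
    intro a b hab
    refine eqvgen_constant F ?_ hab
    rintro a b ⟨i, rfl, rfl⟩
    show ιH (ψ (G.cmk e (u' i))) = mkkH (Sum.inr (ξ (w i)))
    rw [hcycu' i, hξw i]
    show mkkH (Sum.inl (v' (i + 1))) = mkkH (Sum.inr (w (i + 1)))
    exact congrArg cqH (Quotient.sound (Relation.EqvGen.rel _ _ ⟨i + 1, rfl, rfl⟩))
  set F1 : G'.V → (H'.contract (Sum.inl f)).V := Quotient.lift F wd1 with hF1def
  have hkeyG : G.cmk e (u s1) = G.cmk e (u s2) :=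
    Quotient.sound (Relation.EqvGen.rel _ _
      ⟨by rw [he]; exact Sym2.mem_mk_left _ _, by rw [he]; exact Sym2.mem_mk_right _ _⟩)
  have hkeyH : H.cmk f (v t1) = H.cmk f (v t2) :=
    Quotient.sound (Relation.EqvGen.rel _ _
      ⟨by rw [hf]; exact Sym2.mem_mk_left _ _, by rw [hf]; exact Sym2.mem_mk_right _ _⟩)
  have wd2 : ∀ a b : (G'.delete (Sum.inl e)).V,
      (Relation.EqvGen.setoid
        (fun a b => a ∈ G'.ends (Sum.inl e) ∧ b ∈ G'.ends (Sum.inl e))) a b →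
      F1 a = F1 b := by
    intro a b hab
    refine eqvgen_constant F1 ?_ hab
    rintro a b ⟨ha, hb⟩
    rw [hG'ends, Sym2.mem_iff] at ha hb
    have key : F1 (qG (Sum.inl (u s1))) = F1 (qG (Sum.inl (u s2))) :=
      congrArg (fun c => ιH (ψ c)) hkeyG
    rcases ha with rfl | rfl <;> rcases hb with rfl | rfl <;> simp [key]
  set τfun : (G'.contract (Sum.inl e)).V → (H'.contract (Sum.inl f)).V :=
    Quotient.lift F1 wd2 with hτfundef
  -- backward map
  set F' : H.V ⊕ W.V → (G'.contract (Sum.inl e)).V :=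
    Sum.elim (fun h0 => ιG (ψ.symm (H.cmk f h0))) (fun y0 => mkkG (Sum.inr (ξ.symm y0)))
    with hF'def
  have wd1' : ∀ a b : (H.disjUnion W).V,
      (Relation.EqvGen.setoid
        (fun a b => ∃ i : Fin k, a = Sum.inl (v' i) ∧ b = Sum.inr (w i))) a b →
      F' a = F' b := by
    intro a b hab
    refine eqvgen_constant F' ?_ hab
    rintro a b ⟨i, rfl, rfl⟩
    show ιG (ψ.symm (H.cmk f (v' i))) = mkkG (Sum.inr (ξ.symm (w i)))
    rw [hcyc' i, hξw' i]
    show mkkG (Sum.inl (u' (i - 1))) = mkkG (Sum.inr (w (i - 1)))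
    exact congrArg cqG (Quotient.sound (Relation.EqvGen.rel _ _ ⟨i - 1, rfl, rfl⟩))
  set F1' : H'.V → (G'.contract (Sum.inl e)).V := Quotient.lift F' wd1' with hF1'def
  have wd2' : ∀ a b : (H'.delete (Sum.inl f)).V,
      (Relation.EqvGen.setoid
        (fun a b => a ∈ H'.ends (Sum.inl f) ∧ b ∈ H'.ends (Sum.inl f))) a b →
      F1' a = F1' b := by
    intro a b hab
    refine eqvgen_constant F1' ?_ hab
    rintro a b ⟨ha, hb⟩
    rw [hH'ends, Sym2.mem_iff] at ha hb
    have key : F1' (qH (Sum.inl (v t1))) = F1' (qH (Sum.inl (v t2))) :=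
      congrArg (fun c => ιG (ψ.symm c)) hkeyH
    rcases ha with rfl | rfl <;> rcases hb with rfl | rfl <;> simp [key]
  set τinvfun : (H'.contract (Sum.inl f)).V → (G'.contract (Sum.inl e)).V :=
    Quotient.lift F1' wd2' with hτinvfundef
  set τ : (G'.contract (Sum.inl e)).V ≃ (H'.contract (Sum.inl f)).V := {
    toFun := τfun
    invFun := τinvfun
    left_inv := by
      refine Quotient.ind ?_
      refine Quotient.ind ?_
      rintro (g0 | y0)
      · show τinvfun (ιH (ψ (G.cmk e g0))) = mkkG (Sum.inl g0)
        have hred : ∀ c : (H.contract f).V, τinvfun (ιH c) = ιG (ψ.symm c) :=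
          Quotient.ind (fun h0 => rfl)
        rw [hred, Equiv.symm_apply_apply]
        rfl
      · show mkkG (Sum.inr (ξ.symm (ξ y0))) = mkkG (Sum.inr y0)
        rw [Equiv.symm_apply_apply]
    right_inv := by
      refine Quotient.ind ?_
      refine Quotient.ind ?_
      rintro (h0 | y0)
      · show τfun (ιG (ψ.symm (H.cmk f h0))) = mkkH (Sum.inl h0)
        have hred : ∀ c : (G.contract e).V, τfun (ιG c) = ιH (ψ c) :=
          Quotient.ind (fun g0 => rfl)
        rw [hred, Equiv.apply_symm_apply]
        rfl
      · show mkkH (Sum.inr (ξ (ξ.symm y0))) = mkkH (Sum.inr y0)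
        rw [Equiv.apply_symm_apply] } with hτdef
  have hτmkl : ∀ g0 : G.V, τ (mkkG (Sum.inl g0)) = ιH (ψ (G.cmk e g0)) := fun _ => rfl
  have hτmkr : ∀ y0 : W.V, τ (mkkG (Sum.inr y0)) = mkkH (Sum.inr (ξ y0)) := fun _ => rfl
  have hcec : ∀ z : G.E ⊕ W.E, z ≠ Sum.inl e →
      Sym2.map cqH (H'.ends (cec z)) = Sym2.map (⇑τ) (Sym2.map cqG (G'.ends z)) := by
    rintro (a | b) hz
    · have ha : a ≠ e := fun h => hz (by rw [h])
      rw [hcecdef, sumExtend_ne e f θψ θξ a ha]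
      show Sym2.map cqH ((H.glue W v' w).ends (Sum.inl ((θψ ⟨a, by simp [ha]⟩).1))) =
        Sym2.map (⇑τ) (Sym2.map cqG ((G.glue W u' w).ends (Sum.inl a)))
      rw [Multigraph.glue_ends_inl, Multigraph.glue_ends_inl, Sym2.map_map, Sym2.map_map,
        Sym2.map_map]
      have lhs : (fun x => cqH (qH (Sum.inl x))) = fun x => ιH (H.cmk f x) := rfl
      have rhs : ((fun x => (⇑τ) (cqG (qG (Sum.inl x))))) = fun x => ιH (ψ (G.cmk e x)) := rfl
      show Sym2.map (fun x => ιH (H.cmk f x)) (H.ends (θψ ⟨a, by simp [ha]⟩).1) =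
        Sym2.map (fun x => ιH (ψ (G.cmk e x))) (G.ends a)
      have h1 := hθψ' ⟨a, by simp [ha]⟩
      have h2 := congrArg (Sym2.map ιH) h1
      rw [Sym2.map_map, Sym2.map_map, Sym2.map_map] at h2
      exact h2
    · rw [hcecdef, sumExtend_inr e f θψ θξ b]
      show Sym2.map cqH ((H.glue W v' w).ends (Sum.inr (θξ b))) =
        Sym2.map (⇑τ) (Sym2.map cqG ((G.glue W u' w).ends (Sum.inr b)))
      rw [Multigraph.glue_ends_inr, Multigraph.glue_ends_inr, hθξ b, Sym2.map_map,
        Sym2.map_map, Sym2.map_map, Sym2.map_map]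
      rfl
  -- the first goal: isomorphism of deletions
  refine ⟨⟨σ', ?_⟩, ⟨τ, ?_⟩, ?_⟩
  · refine Multigraph.isIsoMap_of_edgeEquiv (G'.delete (Sum.inl e)) (H'.delete (Sum.inl f)) σ' (restrictE ced (Sum.inl e) (Sum.inl f) hcedE)
      (fun z => ?_)
    show H'.ends (ced z.1) = Sym2.map (⇑σ') (G'.ends z.1)
    exact hced z.1 (fun h => z.2 (Finset.mem_singleton.mpr h))
  · refine Multigraph.isIsoMap_of_edgeEquiv (G'.contract (Sum.inl e)) (H'.contract (Sum.inl f)) τ (restrictE cec (Sum.inl e) (Sum.inl f) hcecE)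
      (fun z => ?_)
    show Sym2.map cqH (H'.ends (cec z.1)) = Sym2.map (⇑τ) (Sym2.map cqG (G'.ends z.1))
    exact hcec z.1 (fun h => z.2 (Finset.mem_singleton.mpr h))
  -- Tutte equality
  set Φ : Finset G'.E → Finset H'.E :=
    fun A => if Sum.inl e ∈ A then A.image (⇑cec) else A.image (⇑ced) with hΦdef
  have hcedinj : Function.Injective (⇑ced) := ced.injective
  have hcecinj : Function.Injective (⇑cec) := cec.injective
  have hΦmem : ∀ A, Sum.inl f ∈ Φ A ↔ Sum.inl e ∈ A := by
    intro A
    by_cases hA : Sum.inl e ∈ A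
    · rw [hΦdef]
      simp only [if_pos hA]
      exact ⟨fun _ => hA, fun _ => Finset.mem_image.mpr ⟨Sum.inl e, hA, hcecE⟩⟩
    · rw [hΦdef]
      simp only [if_neg hA]
      constructor
      · intro hmem
        obtain ⟨z, hzA, hz⟩ := Finset.mem_image.mp hmem
        have hze : z = Sum.inl e := hcedinj (hz.trans hcedE.symm)
        exact absurd (hze ▸ hzA) hA
      · intro h; exact absurd h hA
  set Ψ : Finset H'.E → Finset G'.E :=
    fun B => if Sum.inl f ∈ B then B.image (⇑cec.symm) else B.image (⇑ced.symm) with hΨdef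
  have himgsym : ∀ {α β : Type} [DecidableEq α] [DecidableEq β] (c : α ≃ β) (A : Finset α),
      (A.image ⇑c).image ⇑c.symm = A := by
    intro α β _ _ c A
    rw [Finset.image_image]
    have : (⇑c.symm ∘ ⇑c) = id := funext (fun x => c.symm_apply_apply x)
    rw [this, Finset.image_id]
  have himgsym' : ∀ {α β : Type} [DecidableEq α] [DecidableEq β] (c : α ≃ β) (B : Finset β),
      (B.image ⇑c.symm).image ⇑c = B := by
    intro α β _ _ c B
    rw [Finset.image_image]
    have : (⇑c ∘ ⇑c.symm) = id := funext (fun x => c.apply_symm_apply x)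
    rw [this, Finset.image_id]
  have hΨΦ : ∀ A, Ψ (Φ A) = A := by
    intro A
    by_cases hA : Sum.inl e ∈ A
    · rw [hΨdef]
      simp only [if_pos ((hΦmem A).mpr hA)]
      rw [hΦdef]
      simp only [if_pos hA]
      exact himgsym cec A
    · rw [hΨdef]
      simp only [if_neg (fun hcon => hA ((hΦmem A).mp hcon))]
      rw [hΦdef]
      simp only [if_neg hA]
      exact himgsym ced A
  have hcecEs : cec.symm (Sum.inl f) = Sum.inl e := by
    rw [← hcecE, Equiv.symm_apply_apply]
  have hcedEs : ced.symm (Sum.inl f) = Sum.inl e := by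
    rw [← hcedE, Equiv.symm_apply_apply]
  have hΨmem : ∀ B, Sum.inl e ∈ Ψ B ↔ Sum.inl f ∈ B := by
    intro B
    by_cases hB : Sum.inl f ∈ B
    · rw [hΨdef]
      simp only [if_pos hB]
      exact ⟨fun _ => hB, fun _ => Finset.mem_image.mpr ⟨Sum.inl f, hB, hcecEs⟩⟩
    · rw [hΨdef]
      simp only [if_neg hB]
      constructor
      · intro hmem
        obtain ⟨z, hzB, hz⟩ := Finset.mem_image.mp hmem
        have hze : z = Sum.inl f := ced.symm.injective (hz.trans hcedEs.symm)
        exact absurd (hze ▸ hzB) hB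
      · intro h; exact absurd h hB
  have hΦΨ : ∀ B, Φ (Ψ B) = B := by
    intro B
    by_cases hB : Sum.inl f ∈ B
    · rw [hΦdef]
      simp only [if_pos ((hΨmem B).mpr hB)]
      rw [hΨdef]
      simp only [if_pos hB]
      exact himgsym' cec B
    · rw [hΦdef]
      simp only [if_neg (fun hcon => hB ((hΨmem B).mp hcon))]
      rw [hΨdef]
      simp only [if_neg hB]
      exact himgsym' ced B
  have hbij : Function.Bijective Φ :=
    Function.bijective_iff_has_inverse.mpr ⟨Ψ, hΨΦ, hΦΨ⟩
  -- component counts transfer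
  have hcompsD : ∀ A : Finset G'.E, Sum.inl e ∉ A →
      G'.comps A = H'.comps (A.image ⇑ced) := by
    intro A hA
    apply Multigraph.comps_eq_of_spanning_iso G' H' σ'
    intro a b
    constructor
    · rintro ⟨z, hzA, hz⟩
      have hzne : z ≠ Sum.inl e := fun hcon => hA (hcon ▸ hzA)
      refine ⟨ced z, Finset.mem_image_of_mem _ hzA, ?_⟩
      rw [hced z hzne, hz, Sym2.map_pair_eq]
    · rintro ⟨z', hz', hze'⟩
      obtain ⟨z, hzA, rfl⟩ := Finset.mem_image.mp hz'
      have hzne : z ≠ Sum.inl e := fun hcon => hA (hcon ▸ hzA)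
      refine ⟨z, hzA, ?_⟩
      apply Sym2.map.injective σ'.injective
      rw [← hced z hzne, hze', Sym2.map_pair_eq]
  have hcompsC : ∀ A : Finset G'.E, Sum.inl e ∈ A →
      G'.comps A = H'.comps (A.image ⇑cec) := by
    intro A hA
    set A₀ := A.erase (Sum.inl e) with hA₀
    have hA₀ne : Sum.inl e ∉ A₀ := Finset.notMem_erase _ _
    set BcG : Finset (G'.contract (Sum.inl e)).E :=
      A₀.subtype (fun z => z ∉ ({Sum.inl e} : Finset G'.E)) with hBcG
    have hBcGim : BcG.image (fun z => z.1) = A₀ := image_val_subtype A₀ _ hA₀ne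
    set BcH : Finset (H'.contract (Sum.inl f)).E :=
      (A₀.image ⇑cec).subtype (fun z => z ∉ ({Sum.inl f} : Finset H'.E)) with hBcH
    have hfnotin : Sum.inl f ∉ A₀.image ⇑cec := by
      intro hcon
      obtain ⟨z, hz, hze⟩ := Finset.mem_image.mp hcon
      exact hA₀ne (by rwa [hcecinj (hze.trans hcecE.symm)] at hz)
    have hBcHim : BcH.image (fun z => z.1) = A₀.image ⇑cec := image_val_subtype _ _ hfnotin
    have step1 : G'.comps A = G'.comps (insert (Sum.inl e) (BcG.image (fun z => z.1))) := by
      rw [hBcGim, hA₀]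
      exact congrArg _ (Finset.insert_erase hA).symm
    have step2 := G'.comps_contract (Sum.inl e) _ _ hG'ends hndG BcG
    have step4 := H'.comps_contract (Sum.inl f) _ _ hH'ends hndH BcH
    have step3 : (G'.contract (Sum.inl e)).comps BcG = (H'.contract (Sum.inl f)).comps BcH := by
      apply Multigraph.comps_eq_of_spanning_iso _ _ τ
      intro a b
      constructor
      · rintro ⟨z, hz, hze⟩
        replace hz : z.1 ∈ A₀ := Finset.mem_subtype.mp hz
        have hzne : z.1 ≠ Sum.inl e := fun h => z.2 (Finset.mem_singleton.mpr h)
        have hcne : cec z.1 ∉ ({Sum.inl f} : Finset H'.E) := by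
          intro hcon
          exact hzne (hcecinj ((Finset.mem_singleton.mp hcon).trans hcecE.symm))
        refine ⟨⟨cec z.1, hcne⟩, ?_, ?_⟩
        · exact Finset.mem_subtype.mpr (Finset.mem_image_of_mem _ hz)
        · show Sym2.map cqH (H'.ends (cec z.1)) = s(τ a, τ b)
          have hze2 : Sym2.map cqG (G'.ends z.1) = s(a, b) := hze
          rw [hcec z.1 hzne, hze2, Sym2.map_pair_eq]
      · rintro ⟨z', hz', hze'⟩
        replace hz' : z'.1 ∈ A₀.image ⇑cec := Finset.mem_subtype.mp hz'
        obtain ⟨z0, hz0, hz0e⟩ := Finset.mem_image.mp hz'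
        have hz0ne : z0 ≠ Sum.inl e := by
          rintro rfl
          exact hA₀ne hz0
        have hz0s : z0 ∉ ({Sum.inl e} : Finset G'.E) :=
          fun h => hz0ne (Finset.mem_singleton.mp h)
        refine ⟨⟨z0, hz0s⟩, Finset.mem_subtype.mpr hz0, ?_⟩
        show Sym2.map cqG (G'.ends z0) = s(a, b)
        apply Sym2.map.injective τ.injective
        have hze2 : Sym2.map cqH (H'.ends z'.1) = s(τ a, τ b) := hze'
        calc Sym2.map (⇑τ) (Sym2.map cqG (G'.ends z0))
            = Sym2.map cqH (H'.ends (cec z0)) := (hcec z0 hz0ne).symm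
          _ = Sym2.map cqH (H'.ends z'.1) := by rw [hz0e]
          _ = s(τ a, τ b) := hze2
          _ = Sym2.map (⇑τ) s(a, b) := by rw [Sym2.map_pair_eq]
    have step5 : insert (Sum.inl f) (BcH.image (fun z => z.1)) = A.image ⇑cec := by
      rw [hBcHim]
      conv_rhs => rw [← Finset.insert_erase hA]
      rw [Finset.image_insert, hcecE, hA₀]
      rfl
    rw [step1]
    exact (step2.trans step3).trans (step4.symm.trans (congrArg _ step5))
  have hcomps : ∀ A : Finset G'.E, G'.comps A = H'.comps (Φ A) := by
    intro A
    by_cases hA : Sum.inl e ∈ A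
    · rw [hΦdef]
      simp only [if_pos hA]
      exact hcompsC A hA
    · rw [hΦdef]
      simp only [if_neg hA]
      exact hcompsD A hA
  have hcardV : Fintype.card G'.V = Fintype.card H'.V := Fintype.card_congr σ'
  have hrk : ∀ A : Finset G'.E, G'.rk A = H'.rk (Φ A) := by
    intro A
    unfold Multigraph.rk
    rw [hcomps A, hcardV]
  have hΦuniv : Φ Finset.univ = Finset.univ := by
    rw [hΦdef]
    beta_reduce
    split_ifs with h
    · exact Finset.eq_univ_of_forall (fun b =>
        Finset.mem_image.mpr ⟨cec.symm b, Finset.mem_univ _, cec.apply_symm_apply b⟩)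
    · exact absurd (Finset.mem_univ _) h
  have hrkuniv : G'.rk Finset.univ = H'.rk Finset.univ := by
    have h1 := hrk Finset.univ
    rwa [hΦuniv] at h1
  have hcard : ∀ A : Finset G'.E, (Φ A).card = A.card := by
    intro A
    rw [hΦdef]
    by_cases hA : Sum.inl e ∈ A
    · simp only [if_pos hA]
      exact Finset.card_image_of_injective _ hcecinj
    · simp only [if_neg hA]
      exact Finset.card_image_of_injective _ hcedinj
  show G'.tutte = H'.tutte
  unfold Multigraph.tutte
  refine Fintype.sum_bijective Φ hbij _ _ (fun A => ?_)
  rw [hrkuniv, hrk A, ← hcard A]
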